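/- Assume in addition that Φ is strictly increasing on [0,∞). Define the signed entropy density 𝚿̃_{Φ,γ}(ξ) = Ψ_{Φ,γ}(ξ) for ξ ≥ γ and 𝚿̃_{Φ,γ}(ξ) = −Ψ_{Φ,γ}(ξ) for ξ ∈ [0,γ], and let Ent_{Φ,γ}(ℝ^d) denote the set of almost-everywhere equivalence classes of nonnegative measurable functions ρ:ℝ^d→ℝ with ∫_{ℝ^d} Ψ_{Φ,γ}(ρ) < ∞, equipped with d(f,g) = ∫_{ℝ^d} |𝚿̃_{Φ,γ}(f) − 𝚿̃_{Φ,γ}(g)|. Then d is a well-defined, finite metric on Ent_{Φ,γ}(ℝ^d), and the metric space (Ent_{Φ,γ}(ℝ^d), d) is complete and separable. -/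

import Mathlib

open MeasureTheory

/-- The relative entropy density `Ψ_{Φ,γ}(ξ) = ∫_γ^ξ log(Φ(s)/Φ(γ)) ds`. -/
noncomputable def Psi (Φ : ℝ → ℝ) (γ : ℝ) (ξ : ℝ) : ℝ :=
  ∫ s in γ..ξ, Real.log (Φ s / Φ γ)

/-- The signed entropy density `Ψ̃_{Φ,γ}`. -/
noncomputable def PsiSigned (Φ : ℝ → ℝ) (γ : ℝ) (ξ : ℝ) : ℝ :=
  if γ ≤ ξ then Psi Φ γ ξ else -(Psi Φ γ ξ)

/-- The space `Ent_{Φ,γ}(ℝ^d)` of a.e.-equivalence classes of nonnegative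
measurable functions with finite relative entropy. -/
def Ent (d : ℕ) (Φ : ℝ → ℝ) (γ : ℝ) : Type :=
  {ρ : (EuclideanSpace ℝ (Fin d)) →ₘ[volume] ℝ //
    (∀ᵐ x : EuclideanSpace ℝ (Fin d), 0 ≤ ρ x) ∧
    Integrable (fun x => Psi Φ γ (ρ x)) volume}

section Aux

variable {Φ : ℝ → ℝ} {γ : ℝ}

lemma aux_int (hγ : 0 < γ) (hΦpos : ∀ ξ : ℝ, 0 < ξ → 0 < Φ ξ)
    (hlog : ∀ R : ℝ, 0 < R → IntervalIntegrable (fun s => Real.log (Φ s)) volume 0 R)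
    {a b : ℝ} (ha : 0 ≤ a) (hb : 0 ≤ b) :
    IntervalIntegrable (fun s => Real.log (Φ s / Φ γ)) volume a b := by
  have key : ∀ u v : ℝ, 0 ≤ u →
      IntegrableOn (fun s => Real.log (Φ s / Φ γ)) (Set.Ioc u v) volume := by
    intro u v hu
    rcases le_or_gt v u with h | h
    · rw [Set.Ioc_eq_empty (not_lt.2 h)]; exact integrableOn_empty
    · have hv : 0 < v := lt_of_le_of_lt hu h
      have h1 : IntegrableOn (fun s => Real.log (Φ s)) (Set.Ioc 0 v) volume := (hlog v hv).1
      have h2 : IntegrableOn (fun s => Real.log (Φ s)) (Set.Ioc u v) volume :=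
        h1.mono_set (Set.Ioc_subset_Ioc_left hu)
      have h3 : IntegrableOn (fun s => Real.log (Φ s) - Real.log (Φ γ)) (Set.Ioc u v) volume :=
        h2.sub (integrableOn_const measure_Ioc_lt_top.ne)
      refine h3.congr_fun (fun s hs => ?_) measurableSet_Ioc
      rw [Real.log_div (ne_of_gt (hΦpos s (lt_of_le_of_lt hu hs.1))) (ne_of_gt (hΦpos γ hγ))]
  exact ⟨key a b ha, key b a hb⟩

lemma aux_abs (hγ : 0 < γ) (hΦ0 : Φ 0 = 0) (hΦpos : ∀ ξ : ℝ, 0 < ξ → 0 < Φ ξ)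
    (hmono : StrictMonoOn Φ (Set.Ici 0)) {ξ : ℝ} (hξ : 0 ≤ ξ) :
    PsiSigned Φ γ ξ = ∫ s in γ..ξ, |Real.log (Φ s / Φ γ)| := by
  have hΦγ : 0 < Φ γ := hΦpos γ hγ
  rw [PsiSigned, Psi]
  split_ifs with h
  · apply intervalIntegral.integral_congr
    intro s hs
    rw [Set.uIcc_of_le h] at hs
    have hs0 : (0:ℝ) ≤ s := le_trans hγ.le hs.1
    have h1 : Φ γ ≤ Φ s := hmono.monotoneOn hγ.le hs0 hs.1
    have hl : 0 ≤ Real.log (Φ s / Φ γ) := Real.log_nonneg ((one_le_div hΦγ).2 h1)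
    exact (abs_of_nonneg hl).symm
  · push_neg at h
    have h2 : ∫ s in ξ..γ, Real.log (Φ s / Φ γ) = ∫ s in ξ..γ, -|Real.log (Φ s / Φ γ)| := by
      apply intervalIntegral.integral_congr
      intro s hs
      rw [Set.uIcc_of_le h.le] at hs
      have hs0 : (0:ℝ) ≤ s := le_trans hξ hs.1
      have h1 : Φ s ≤ Φ γ := hmono.monotoneOn hs0 hγ.le hs.2
      have hnum : 0 ≤ Φ s := by
        rcases eq_or_lt_of_le hs0 with h' | h'
        · rw [← h', hΦ0]
        · exact (hΦpos s h').le
      have hl : Real.log (Φ s / Φ γ) ≤ 0 :=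
        Real.log_nonpos (div_nonneg hnum hΦγ.le) ((div_le_one hΦγ).2 h1)
      show Real.log (Φ s / Φ γ) = -|Real.log (Φ s / Φ γ)|
      rw [abs_of_nonpos hl, neg_neg]
    rw [intervalIntegral.integral_symm ξ γ, intervalIntegral.integral_symm ξ γ
      (f := fun s => |Real.log (Φ s / Φ γ)|), h2, intervalIntegral.integral_neg, neg_neg]

lemma aux_strict (hγ : 0 < γ) (hΦ0 : Φ 0 = 0) (hΦpos : ∀ ξ : ℝ, 0 < ξ → 0 < Φ ξ)
    (hlog : ∀ R : ℝ, 0 < R → IntervalIntegrable (fun s => Real.log (Φ s)) volume 0 R)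
    (hmono : StrictMonoOn Φ (Set.Ici 0)) :
    StrictMonoOn (PsiSigned Φ γ) (Set.Ici 0) := by
  have hΦγ : 0 < Φ γ := hΦpos γ hγ
  intro a ha b hb hab
  have ha : (0:ℝ) ≤ a := ha
  have hb : (0:ℝ) ≤ b := hb
  have I1 : IntervalIntegrable (fun s => |Real.log (Φ s / Φ γ)|) volume γ a :=
    (aux_int hγ hΦpos hlog hγ.le ha).abs
  have I2 : IntervalIntegrable (fun s => |Real.log (Φ s / Φ γ)|) volume a b :=
    (aux_int hγ hΦpos hlog ha hb).abs
  have hsum := intervalIntegral.integral_add_adjacent_intervals I1 I2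
  rw [aux_abs hγ hΦ0 hΦpos hmono ha, aux_abs hγ hΦ0 hΦpos hmono hb, ← hsum]
  have hpos : 0 < ∫ s in a..b, |Real.log (Φ s / Φ γ)| := by
    rcases le_or_gt b γ with hbγ | hγb
    · refine intervalIntegral.intervalIntegral_pos_of_pos_on I2 (fun x hx => ?_) hab
      have hx0 : 0 < x := lt_of_le_of_lt ha hx.1
      have hxγ : x < γ := lt_of_lt_of_le hx.2 hbγ
      have : Real.log (Φ x / Φ γ) < 0 :=
        Real.log_neg (div_pos (hΦpos x hx0) hΦγ)
          ((div_lt_one hΦγ).2 (hmono hx0.le hγ.le hxγ))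
      exact abs_pos.2 (ne_of_lt this)
    · set m := max a γ with hm
      have hm0 : (0:ℝ) ≤ m := le_trans ha (le_max_left a γ)
      have hmb : m < b := max_lt hab hγb
      have Ia : IntervalIntegrable (fun s => |Real.log (Φ s / Φ γ)|) volume a m :=
        (aux_int hγ hΦpos hlog ha hm0).abs
      have Ib : IntervalIntegrable (fun s => |Real.log (Φ s / Φ γ)|) volume m b :=
        (aux_int hγ hΦpos hlog hm0 hb).abs
      rw [← intervalIntegral.integral_add_adjacent_intervals Ia Ib]
      have h1 : 0 ≤ ∫ s in a..m, |Real.log (Φ s / Φ γ)| :=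
        intervalIntegral.integral_nonneg (le_max_left a γ) (fun u _ => abs_nonneg _)
      have h2 : 0 < ∫ s in m..b, |Real.log (Φ s / Φ γ)| := by
        refine intervalIntegral.intervalIntegral_pos_of_pos_on Ib (fun x hx => ?_) hmb
        have hγx : γ < x := lt_of_le_of_lt (le_max_right a γ) hx.1
        have : 0 < Real.log (Φ x / Φ γ) :=
          Real.log_pos ((one_lt_div hΦγ).2 (hmono hγ.le (le_trans hγ.le hγx.le) hγx))
        exact abs_pos.2 (ne_of_gt this)
      linarith
  linarith

lemma aux_cont (hγ : 0 < γ) (hΦ0 : Φ 0 = 0) (hΦpos : ∀ ξ : ℝ, 0 < ξ → 0 < Φ ξ)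
    (hlog : ∀ R : ℝ, 0 < R → IntervalIntegrable (fun s => Real.log (Φ s)) volume 0 R)
    (hmono : StrictMonoOn Φ (Set.Ici 0)) {R : ℝ} (hR : 0 ≤ R) :
    ContinuousOn (PsiSigned Φ γ) (Set.Icc 0 R) := by
  have hprim : ContinuousOn (fun ξ => ∫ s in γ..ξ, |Real.log (Φ s / Φ γ)|) (Set.Icc 0 R) := by
    intro b₀ _
    refine intervalIntegral.continuousWithinAt_primitive (measure_singleton b₀) ?_
    exact (aux_int hγ hΦpos hlog (le_min hγ.le le_rfl) (le_max_of_le_left hγ.le)).abs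
  exact hprim.congr (fun ξ hξ => aux_abs hγ hΦ0 hΦpos hmono hξ.1)

lemma aux_unbounded (hγ : 0 < γ) (hΦ0 : Φ 0 = 0) (hΦpos : ∀ ξ : ℝ, 0 < ξ → 0 < Φ ξ)
    (hlog : ∀ R : ℝ, 0 < R → IntervalIntegrable (fun s => Real.log (Φ s)) volume 0 R)
    (hmono : StrictMonoOn Φ (Set.Ici 0)) (y : ℝ) :
    ∃ b, 0 ≤ b ∧ y ≤ PsiSigned Φ γ b := by
  have hΦγ : 0 < Φ γ := hΦpos γ hγ
  set ε := Real.log (Φ (2*γ) / Φ γ) with hε'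
  have hε : 0 < ε :=
    Real.log_pos ((one_lt_div hΦγ).2 (hmono hγ.le (Set.mem_Ici.2 (by linarith)) (by linarith)))
  set b := max (2*γ) (2*γ + (y - PsiSigned Φ γ (2*γ)) / ε) with hbdef
  have hb2 : 2*γ ≤ b := le_max_left _ _
  have h2γ : (0:ℝ) ≤ 2*γ := by linarith
  have hb0 : 0 ≤ b := le_trans h2γ hb2
  refine ⟨b, hb0, ?_⟩
  have step : PsiSigned Φ γ (2*γ) + ε * (b - 2*γ) ≤ PsiSigned Φ γ b := by
    rw [aux_abs hγ hΦ0 hΦpos hmono hb0, aux_abs hγ hΦ0 hΦpos hmono h2γ]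
    have Ia : IntervalIntegrable (fun s => |Real.log (Φ s / Φ γ)|) volume γ (2*γ) :=
      (aux_int hγ hΦpos hlog hγ.le h2γ).abs
    have Ib : IntervalIntegrable (fun s => |Real.log (Φ s / Φ γ)|) volume (2*γ) b :=
      (aux_int hγ hΦpos hlog h2γ hb0).abs
    rw [← intervalIntegral.integral_add_adjacent_intervals Ia Ib]
    have hmain : ε * (b - 2*γ) ≤ ∫ s in (2*γ)..b, |Real.log (Φ s / Φ γ)| := by
      have hm := intervalIntegral.integral_mono_on hb2 (intervalIntegrable_const (c := ε)) Ib
        (fun x hx => ?_)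
      · rw [intervalIntegral.integral_const, smul_eq_mul] at hm
        linarith [hm]
      · have h1 : Φ (2*γ) ≤ Φ x := hmono.monotoneOn h2γ (le_trans h2γ hx.1) hx.1
        have h2 : ε ≤ Real.log (Φ x / Φ γ) := by
          apply Real.log_le_log (div_pos (hΦpos _ (by linarith)) hΦγ)
          exact (div_le_div_iff_of_pos_right hΦγ).2 h1
        exact le_trans h2 (le_abs_self _)
    linarith
  have h1 : (y - PsiSigned Φ γ (2*γ)) / ε ≤ b - 2*γ := by
    have := le_max_right (2*γ) (2*γ + (y - PsiSigned Φ γ (2*γ)) / ε)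
    rw [← hbdef] at this; linarith
  have h2 : y - PsiSigned Φ γ (2*γ) ≤ ε * (b - 2*γ) := by
    rw [div_le_iff₀ hε] at h1; linarith [h1, mul_comm (b - 2*γ) ε]
  linarith

lemma aux_surj (hγ : 0 < γ) (hΦ0 : Φ 0 = 0) (hΦpos : ∀ ξ : ℝ, 0 < ξ → 0 < Φ ξ)
    (hlog : ∀ R : ℝ, 0 < R → IntervalIntegrable (fun s => Real.log (Φ s)) volume 0 R)
    (hmono : StrictMonoOn Φ (Set.Ici 0)) (y : ℝ) (hy : PsiSigned Φ γ 0 ≤ y) :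
    ∃ ξ, 0 ≤ ξ ∧ PsiSigned Φ γ ξ = y := by
  obtain ⟨b, hb0, hby⟩ := aux_unbounded hγ hΦ0 hΦpos hlog hmono y
  obtain ⟨ξ, hξ, hval⟩ :=
    intermediate_value_Icc hb0 (aux_cont hγ hΦ0 hΦpos hlog hmono hb0) ⟨hy, hby⟩
  exact ⟨ξ, hξ.1, hval⟩

end Aux

theorem stmt3 (d : ℕ) (Φ : ℝ → ℝ) (γ : ℝ) (hγ : 0 < γ)
    (hΦc : ContinuousOn Φ (Set.Ici 0)) (hΦ0 : Φ 0 = 0)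
    (hΦpos : ∀ ξ : ℝ, 0 < ξ → 0 < Φ ξ)
    (hlog : ∀ R : ℝ, 0 < R →
      IntervalIntegrable (fun s => Real.log (Φ s)) volume 0 R)
    (hmono : StrictMonoOn Φ (Set.Ici 0)) :
    ∃ m : MetricSpace (Ent d Φ γ),
      (∀ f g : Ent d Φ γ,
        Integrable (fun x => |PsiSigned Φ γ (f.1 x) - PsiSigned Φ γ (g.1 x)|) volume ∧
        @Dist.dist _ m.toDist f g
          = ∫ x, |PsiSigned Φ γ (f.1 x) - PsiSigned Φ γ (g.1 x)|) ∧
      @CompleteSpace _ m.toUniformSpace ∧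
      @TopologicalSpace.SeparableSpace _ m.toUniformSpace.toTopologicalSpace := by
  classical
  have hΦγ : 0 < Φ γ := hΦpos γ hγ
  have hstrict : StrictMonoOn (PsiSigned Φ γ) (Set.Ici 0) :=
    aux_strict hγ hΦ0 hΦpos hlog hmono
  have hmonoOn : MonotoneOn (PsiSigned Φ γ) (Set.Ici 0) := hstrict.monotoneOn
  set c := PsiSigned Φ γ 0 with hc
  have hGγ : PsiSigned Φ γ γ = 0 := by simp [PsiSigned, Psi]
  have hc0 : c ≤ 0 := by
    have := hmonoOn (Set.mem_Ici.2 le_rfl) (Set.mem_Ici.2 hγ.le) hγ.le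
    rwa [hGγ] at this
  -- the monotone extension of `PsiSigned` by its value at `0`
  set GM : ℝ → ℝ := fun ξ => PsiSigned Φ γ (max ξ 0) with hGMdef
  have hGMeq : ∀ ξ : ℝ, 0 ≤ ξ → GM ξ = PsiSigned Φ γ ξ := by
    intro ξ hξ; simp only [hGMdef, max_eq_left hξ]
  have hGMmono : Monotone GM := fun x y hxy =>
    hmonoOn (Set.mem_Ici.2 (le_max_right x 0)) (Set.mem_Ici.2 (le_max_right y 0))
      (max_le_max hxy le_rfl)
  have hGMmeas : Measurable GM := hGMmono.measurable
  have hGMc : ∀ ξ, c ≤ GM ξ := fun ξ =>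
    hmonoOn (Set.mem_Ici.2 le_rfl) (Set.mem_Ici.2 (le_max_right ξ 0)) (le_max_right ξ 0)
  -- the inverse function φ
  have hunb : ∀ y : ℝ, ∃ b, 0 ≤ b ∧ y ≤ PsiSigned Φ γ b :=
    aux_unbounded hγ hΦ0 hΦpos hlog hmono
  have hsurj : ∀ y : ℝ, c ≤ y → ∃ ξ, 0 ≤ ξ ∧ PsiSigned Φ γ ξ = y :=
    aux_surj hγ hΦ0 hΦpos hlog hmono
  have hSne : ∀ y : ℝ, {ξ : ℝ | 0 ≤ ξ ∧ y ≤ PsiSigned Φ γ ξ}.Nonempty := fun y =>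
    let ⟨b, hb⟩ := hunb y; ⟨b, hb⟩
  have hSbdd : ∀ y : ℝ, BddBelow {ξ : ℝ | 0 ≤ ξ ∧ y ≤ PsiSigned Φ γ ξ} := fun y =>
    ⟨0, fun ξ hξ => hξ.1⟩
  set φ : ℝ → ℝ := fun y => sInf {ξ : ℝ | 0 ≤ ξ ∧ y ≤ PsiSigned Φ γ ξ} with hφdef
  have hφmono : Monotone φ := fun y₁ y₂ h =>
    csInf_le_csInf (hSbdd y₁) (hSne y₂) (fun ξ hξ => ⟨hξ.1, le_trans h hξ.2⟩)
  have hφmeas : Measurable φ := hφmono.measurable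
  have hφ0 : ∀ y, 0 ≤ φ y := fun y => le_csInf (hSne y) (fun ξ hξ => hξ.1)
  have hφinv : ∀ y, c ≤ y → PsiSigned Φ γ (φ y) = y := by
    intro y hy
    obtain ⟨ξ₀, hξ₀0, hξ₀⟩ := hsurj y hy
    have hset : {ξ : ℝ | 0 ≤ ξ ∧ y ≤ PsiSigned Φ γ ξ} = Set.Ici ξ₀ := by
      ext ξ
      simp only [Set.mem_setOf_eq, Set.mem_Ici]
      constructor
      · rintro ⟨h0, hle⟩
        by_contra hlt
        push_neg at hlt
        have := hstrict (Set.mem_Ici.2 h0) (Set.mem_Ici.2 hξ₀0) hlt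
        rw [hξ₀] at this
        linarith
      · intro hξ
        exact ⟨le_trans hξ₀0 hξ,
          hξ₀ ▸ hmonoOn (Set.mem_Ici.2 hξ₀0) (Set.mem_Ici.2 (le_trans hξ₀0 hξ)) hξ⟩
    show PsiSigned Φ γ (sInf {ξ : ℝ | 0 ≤ ξ ∧ y ≤ PsiSigned Φ γ ξ}) = y
    rw [hset, csInf_Ici]
    exact hξ₀
  -- the embedding into L¹
  have hmem : ∀ ρ : Ent d Φ γ, Integrable (fun x => GM (ρ.1 x)) volume := by
    intro ρ
    refine Integrable.mono ρ.2.2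
      ((hGMmeas.comp ρ.1.stronglyMeasurable.measurable).aestronglyMeasurable) ?_
    filter_upwards [ρ.2.1] with x hx
    rw [Real.norm_eq_abs, Real.norm_eq_abs, hGMeq _ hx]
    rw [PsiSigned]
    split_ifs <;> simp [abs_neg]
  set T : Ent d Φ γ → Lp ℝ 1 (volume : Measure (EuclideanSpace ℝ (Fin d))) :=
    fun ρ => (hmem ρ).toL1 _ with hT
  have hTcoe : ∀ ρ : Ent d Φ γ, ⇑(T ρ) =ᵐ[volume] fun x => GM (ρ.1 x) := fun ρ =>
    (hmem ρ).coeFn_toL1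
  have hTinj : Function.Injective T := by
    intro f g h
    have h0 : ⇑(T f) =ᵐ[volume] ⇑(T g) := by rw [h]
    have h1 : (fun x => GM (f.1 x)) =ᵐ[volume] (fun x => GM (g.1 x)) :=
      (hTcoe f).symm.trans (h0.trans (hTcoe g))
    apply Subtype.ext
    apply MeasureTheory.AEEqFun.ext
    filter_upwards [f.2.1, g.2.1, h1] with x hf0 hg0 hx
    rw [hGMeq _ hf0, hGMeq _ hg0] at hx
    exact hstrict.injOn (Set.mem_Ici.2 hf0) (Set.mem_Ici.2 hg0) hx
  letI m : MetricSpace (Ent d Φ γ) := MetricSpace.induced T hTinj inferInstance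
  have hiso : Isometry T := Isometry.of_dist_eq (fun x y => rfl)
  have hui : IsUniformInducing T := hiso.isUniformInducing
  refine ⟨m, ?_, ?_, ?_⟩
  · -- distance formula
    intro f g
    have hint : Integrable (fun x => |GM (f.1 x) - GM (g.1 x)|) volume :=
      ((hmem f).sub (hmem g)).abs
    have haeq : (fun x => |GM (f.1 x) - GM (g.1 x)|) =ᵐ[volume]
        (fun x => |PsiSigned Φ γ (f.1 x) - PsiSigned Φ γ (g.1 x)|) := by
      filter_upwards [f.2.1, g.2.1] with x h1' h2'
      rw [hGMeq _ h1', hGMeq _ h2']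
    refine ⟨hint.congr haeq, ?_⟩
    show dist (T f) (T g) = _
    rw [dist_eq_norm, ← Integrable.toL1_sub _ _ (hmem f) (hmem g),
      MeasureTheory.L1.norm_of_fun_eq_integral_norm]
    refine integral_congr_ae ?_
    filter_upwards [f.2.1, g.2.1] with x h1' h2'
    simp only [Pi.sub_apply, Real.norm_eq_abs]
    rw [hGMeq _ h1', hGMeq _ h2']
  · -- completeness
    -- the range of T is the closed set of L¹ functions a.e. bounded below by c
    have hUint : ∀ h : Lp ℝ 1 (volume : Measure (EuclideanSpace ℝ (Fin d))),
        Integrable (fun x => max (c - h x) 0) volume := by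
      intro h
      refine Integrable.mono (L1.integrable_coeFn h)
        ((((Lp.stronglyMeasurable h).measurable.const_sub c).max
          measurable_const).aestronglyMeasurable) ?_
      refine Filter.Eventually.of_forall (fun x => ?_)
      rw [Real.norm_eq_abs, Real.norm_eq_abs]
      rcases le_or_gt (c - h x) 0 with h' | h'
      · rw [max_eq_right h']; simpa using abs_nonneg _
      · rw [max_eq_left h'.le, abs_of_pos h']
        have hneg : h x < 0 := by linarith
        rw [abs_of_neg hneg]; linarith
    set F : Lp ℝ 1 (volume : Measure (EuclideanSpace ℝ (Fin d))) → ℝ :=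
      fun h => ∫ x, max (c - h x) 0 with hF
    have hFcont : Continuous F := by
      refine (LipschitzWith.of_dist_le_mul (K := 1) (fun h₁ h₂ => ?_)).continuous
      rw [NNReal.coe_one, one_mul, Real.dist_eq]
      have e1 : F h₁ - F h₂ = ∫ x, (max (c - h₁ x) 0 - max (c - h₂ x) 0) :=
        (integral_sub (hUint h₁) (hUint h₂)).symm
      rw [e1]
      have e2 : |∫ x, (max (c - h₁ x) 0 - max (c - h₂ x) 0)|
          ≤ ∫ x, |max (c - h₁ x) 0 - max (c - h₂ x) 0| := by
        simpa [Real.norm_eq_abs] using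
          norm_integral_le_integral_norm (fun x => max (c - h₁ x) 0 - max (c - h₂ x) 0)
      have e3 : ∫ x, |max (c - h₁ x) 0 - max (c - h₂ x) 0| ≤ ∫ x, |h₁ x - h₂ x| := by
        refine integral_mono ((hUint h₁).sub (hUint h₂)).abs
          ((L1.integrable_coeFn h₁).sub (L1.integrable_coeFn h₂)).abs (fun x => ?_)
        calc |max (c - h₁ x) 0 - max (c - h₂ x) 0| ≤ |(c - h₁ x) - (c - h₂ x)| :=
              abs_max_sub_max_le_abs _ _ _
          _ = |h₁ x - h₂ x| := by
              have : (c - h₁ x) - (c - h₂ x) = h₂ x - h₁ x := by ring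
              rw [this, abs_sub_comm]
      have e4 : dist h₁ h₂ = ∫ x, |h₁ x - h₂ x| := by
        rw [dist_eq_norm, L1.norm_eq_integral_norm]
        refine integral_congr_ae ?_
        filter_upwards [Lp.coeFn_sub h₁ h₂] with x hx
        rw [hx]; simp [Real.norm_eq_abs]
      rw [e4]
      exact le_trans e2 e3
    set Scl : Set (Lp ℝ 1 (volume : Measure (EuclideanSpace ℝ (Fin d)))) :=
      {h | ∀ᵐ x ∂(volume : Measure (EuclideanSpace ℝ (Fin d))), c ≤ h x} with hScl
    have hSeq : Scl = F ⁻¹' {0} := by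
      ext h
      simp only [hScl, Set.mem_setOf_eq, Set.mem_preimage, Set.mem_singleton_iff, hF]
      have hiff := integral_eq_zero_iff_of_nonneg
        (f := fun x : EuclideanSpace ℝ (Fin d) => max (c - h x) 0)
        (fun x => le_max_right _ _) (hUint h)
      rw [hiff]
      constructor
      · intro hh
        filter_upwards [hh] with x hx
        simp only [Pi.zero_apply]
        rw [max_eq_right (by linarith)]
      · intro hh
        filter_upwards [hh] with x hx
        simp only [Pi.zero_apply] at hx
        have := max_eq_right_iff.1 hx
        linarith
    have hclosed : IsClosed Scl := by
      rw [hSeq]; exact isClosed_singleton.preimage hFcont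
    have hrange : Set.range T = Scl := by
      apply Set.Subset.antisymm
      · rintro _ ⟨ρ, rfl⟩
        show ∀ᵐ x ∂(volume : Measure (EuclideanSpace ℝ (Fin d))), c ≤ (T ρ) x
        filter_upwards [hTcoe ρ] with x hx
        rw [hx]
        exact hGMc _
      · intro h hh
        have hh' : ∀ᵐ x ∂(volume : Measure (EuclideanSpace ℝ (Fin d))), c ≤ h x := hh
        have hρ₀meas : Measurable (fun x : EuclideanSpace ℝ (Fin d) => φ (h x)) :=
          hφmeas.comp (Lp.stronglyMeasurable h).measurable
        have hkey : ∀ᵐ x ∂(volume : Measure (EuclideanSpace ℝ (Fin d))),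
            GM (φ (h x)) = h x := by
          filter_upwards [hh'] with x hx
          rw [hGMeq _ (hφ0 _)]
          exact hφinv _ hx
        have hψeq : ∀ x : EuclideanSpace ℝ (Fin d), Psi Φ γ (φ (h x))
            = if γ ≤ φ (h x) then GM (φ (h x)) else -(GM (φ (h x))) := by
          intro x
          rw [hGMeq _ (hφ0 _)]
          by_cases hx : γ ≤ φ (h x) <;> simp [PsiSigned, hx]
        have hψmeas : AEStronglyMeasurable
            (fun x : EuclideanSpace ℝ (Fin d) => Psi Φ γ (φ (h x))) volume := by
          have hmeas2 : Measurable (fun x : EuclideanSpace ℝ (Fin d) =>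
              if γ ≤ φ (h x) then GM (φ (h x)) else -(GM (φ (h x)))) :=
            Measurable.ite (measurableSet_le measurable_const hρ₀meas)
              (hGMmeas.comp hρ₀meas) ((hGMmeas.comp hρ₀meas).neg)
          have : (fun x : EuclideanSpace ℝ (Fin d) => Psi Φ γ (φ (h x)))
              = fun x => if γ ≤ φ (h x) then GM (φ (h x)) else -(GM (φ (h x))) :=
            funext hψeq
          rw [this]
          exact hmeas2.aestronglyMeasurable
        have hψint : Integrable
            (fun x : EuclideanSpace ℝ (Fin d) => Psi Φ γ (φ (h x))) volume := by
          refine Integrable.mono (L1.integrable_coeFn h) hψmeas ?_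
          filter_upwards [hkey] with x hx
          rw [Real.norm_eq_abs, Real.norm_eq_abs, hψeq x]
          split_ifs
          · rw [hx]
          · rw [abs_neg, hx]
        have hcoe : ⇑(AEEqFun.mk (fun x : EuclideanSpace ℝ (Fin d) => φ (h x))
            hρ₀meas.aestronglyMeasurable) =ᵐ[volume]
            (fun x : EuclideanSpace ℝ (Fin d) => φ (h x)) := AEEqFun.coeFn_mk _ _
        refine ⟨⟨AEEqFun.mk (fun x : EuclideanSpace ℝ (Fin d) => φ (h x))
          hρ₀meas.aestronglyMeasurable, ?_, ?_⟩, ?_⟩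
        · filter_upwards [hcoe] with x hx
          rw [hx]; exact hφ0 _
        · refine hψint.congr ?_
          filter_upwards [hcoe] with x hx
          rw [hx]
        · apply Lp.ext
          refine (hTcoe _).trans ?_
          have h2 : (fun x => GM ((AEEqFun.mk (fun x : EuclideanSpace ℝ (Fin d) => φ (h x))
              hρ₀meas.aestronglyMeasurable : (EuclideanSpace ℝ (Fin d)) →ₘ[volume] ℝ) x))
              =ᵐ[volume] fun x => GM (φ (h x)) := by
            filter_upwards [hcoe] with x hx
            rw [hx]
          exact h2.trans hkey
    exact (completeSpace_iff_isComplete_range hui).2 (hrange ▸ hclosed.isComplete)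
  · -- separability
    haveI : Fact ((1:ENNReal) ≤ 1) := ⟨le_rfl⟩
    haveI : Fact ((1:ENNReal) ≠ ⊤) := ⟨ENNReal.one_ne_top⟩
    haveI h2nd : SecondCountableTopology
        (Lp ℝ 1 (volume : Measure (EuclideanSpace ℝ (Fin d)))) := inferInstance
    haveI := hui.isInducing.secondCountableTopology
    exact TopologicalSpace.SecondCountableTopology.to_separableSpace
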